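/- Let |λ| < 2/δ and consider a chain of n edges each of length δ with endpoint x = nδ. Then the series ∑_{k=0}^∞ λ^k Z^{:k:}(x)/k!, where Z^{:k:} are the discrete powers on the chain (defined by trapezoidal integration), converges absolutely and equals ((1 + λδ/2)/(1 − λδ/2))^n. -/

import Mathlib

/-- For `|λ| < 2/δ`, the series `∑_k λ^k Z^{:k:}(x)/k!` of discrete powers on a
chain of `n` edges of length `δ` converges absolutely and sums to the discrete
exponential `((1+λδ/2)/(1−λδ/2))^n` at the endpoint `x = nδ`. -/
theorem discrete_exponential_series (δ : ℝ) (hδ : 0 < δ) (lam : ℂ)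
    (hlam : ‖lam‖ < 2 / δ) (n : ℕ) (Z : ℕ → ℕ → ℂ)
    (hZ0 : ∀ ℓ, Z 0 ℓ = 1)
    (hZinit : ∀ k, Z (k + 1) 0 = 0)
    (hZrec : ∀ k ℓ, Z (k + 1) (ℓ + 1) =
      Z (k + 1) ℓ + ((k : ℂ) + 1) * (Z k ℓ + Z k (ℓ + 1)) * (δ : ℂ) / 2) :
    Summable (fun k : ℕ => ‖lam ^ k * Z k n / (k.factorial : ℂ)‖) ∧
    ∑' k : ℕ, lam ^ k * Z k n / (k.factorial : ℂ)
      = ((1 + lam * δ / 2) / (1 - lam * δ / 2)) ^ n := by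
  have hbd : ∀ k ℓ : ℕ, ‖Z k ℓ‖ ≤
      (k.factorial : ℝ) * (δ/2)^k * 2^ℓ * ((k:ℝ)+1)^ℓ := by
    intro k
    induction k with
    | zero =>
      intro ℓ
      simp only [hZ0, norm_one, Nat.factorial_zero, Nat.cast_one, pow_zero,
        Nat.cast_zero, zero_add, one_pow, one_mul, mul_one]
      calc (1:ℝ) = 1^ℓ := (one_pow ℓ).symm
        _ ≤ 2^ℓ := pow_le_pow_left₀ one_pos.le one_le_two ℓ
    | succ k ih =>
      intro ℓ
      induction ℓ with
      | zero => simp only [hZinit, norm_zero]; positivity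
      | succ ℓ ihl =>
        rw [hZrec]
        have h1 := ih ℓ
        have h2 := ih (ℓ+1)
        have e : ‖Z (k+1) ℓ + ((k:ℂ)+1) * (Z k ℓ + Z k (ℓ+1)) * (δ:ℂ) / 2‖
            ≤ ‖Z (k+1) ℓ‖ + ((k:ℝ)+1) * (‖Z k ℓ‖ + ‖Z k (ℓ+1)‖) * δ / 2 := by
          have n1 : ‖((k:ℂ)+1)‖ = (k:ℝ)+1 := by
            have : ((k:ℂ)+1) = ((k+1 : ℕ) : ℂ) := by push_cast; ring
            rw [this, Complex.norm_natCast]; push_cast; ring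
          have n2 : ‖(δ:ℂ)‖ = δ := by
            rw [Complex.norm_real, Real.norm_of_nonneg hδ.le]
          calc ‖Z (k+1) ℓ + ((k:ℂ)+1) * (Z k ℓ + Z k (ℓ+1)) * (δ:ℂ) / 2‖
              ≤ ‖Z (k+1) ℓ‖ + ‖((k:ℂ)+1) * (Z k ℓ + Z k (ℓ+1)) * (δ:ℂ) / 2‖ :=
                norm_add_le _ _
            _ = ‖Z (k+1) ℓ‖ + ((k:ℝ)+1) * ‖Z k ℓ + Z k (ℓ+1)‖ * δ / 2 := by
                rw [norm_div, norm_mul, norm_mul, n1, n2]; norm_num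
            _ ≤ _ := by
                have := norm_add_le (Z k ℓ) (Z k (ℓ+1))
                gcongr
        refine e.trans ?_
        have hf : (((k+1).factorial : ℕ) : ℝ) = ((k:ℝ)+1) * k.factorial := by
          push_cast [Nat.factorial_succ]; ring
        have h3 : ((k:ℝ)+2)^ℓ + ((k:ℝ)+1)^ℓ + 2 * ((k:ℝ)+1)^(ℓ+1)
            ≤ 2 * ((k:ℝ)+2)^(ℓ+1) := by
          have hk1 : ((k:ℝ)+1)^ℓ ≤ ((k:ℝ)+2)^ℓ := by
            apply pow_le_pow_left₀ (by positivity); linarith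
          have hk2 : ((k:ℝ)+1)^(ℓ+1) ≤ ((k:ℝ)+1) * ((k:ℝ)+2)^ℓ := by
            rw [pow_succ']
            gcongr
          calc ((k:ℝ)+2)^ℓ + ((k:ℝ)+1)^ℓ + 2 * ((k:ℝ)+1)^(ℓ+1)
              ≤ ((k:ℝ)+2)^ℓ + ((k:ℝ)+2)^ℓ + 2 * (((k:ℝ)+1) * ((k:ℝ)+2)^ℓ) := by
                gcongr
            _ = 2 * (((k:ℝ)+2) * ((k:ℝ)+2)^ℓ) := by ring
            _ = 2 * ((k:ℝ)+2)^(ℓ+1) := by rw [pow_succ']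
        have key : ((k+1).factorial : ℝ) * (δ/2)^(k+1) * 2^ℓ * (((k+1):ℝ)+1)^ℓ
            + ((k:ℝ)+1) * (((k.factorial : ℝ) * (δ/2)^k * 2^ℓ * ((k:ℝ)+1)^ℓ)
              + ((k.factorial : ℝ) * (δ/2)^k * 2^(ℓ+1) * ((k:ℝ)+1)^(ℓ+1))) * δ / 2
            ≤ ((k+1).factorial : ℝ) * (δ/2)^(k+1) * 2^(ℓ+1) * (((k+1):ℝ)+1)^(ℓ+1) := by
          rw [hf]
          have hc : (0:ℝ) ≤ ((k:ℝ)+1) * k.factorial * (δ/2)^(k+1) * 2^ℓ := by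
            positivity
          have e2 : (((k+1):ℝ)+1) = ((k:ℝ)+2) := by push_cast; ring
          rw [e2]
          calc ((k:ℝ)+1) * k.factorial * (δ/2)^(k+1) * 2^ℓ * ((k:ℝ)+2)^ℓ
              + ((k:ℝ)+1) * (((k.factorial : ℝ) * (δ/2)^k * 2^ℓ * ((k:ℝ)+1)^ℓ)
                + ((k.factorial : ℝ) * (δ/2)^k * 2^(ℓ+1) * ((k:ℝ)+1)^(ℓ+1))) * δ / 2
              = (((k:ℝ)+1) * k.factorial * (δ/2)^(k+1) * 2^ℓ) *
                (((k:ℝ)+2)^ℓ + ((k:ℝ)+1)^ℓ + 2 * ((k:ℝ)+1)^(ℓ+1)) := by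
                  rw [pow_succ (δ/2) k, pow_succ (2:ℝ) ℓ]; ring
            _ ≤ (((k:ℝ)+1) * k.factorial * (δ/2)^(k+1) * 2^ℓ) *
                (2 * ((k:ℝ)+2)^(ℓ+1)) := mul_le_mul_of_nonneg_left h3 hc
            _ = ((k:ℝ)+1) * k.factorial * (δ/2)^(k+1) * 2^(ℓ+1) * ((k:ℝ)+2)^(ℓ+1) := by
                  rw [pow_succ (2:ℝ) ℓ]; ring
        push_cast at key ihl h1 h2 ⊢
        refine le_trans ?_ key
        gcongr

  set r : ℝ := ‖lam‖ * δ / 2 with hrdef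
  have hr0 : 0 ≤ r := by positivity
  have hr1 : r < 1 := by
    have h := (lt_div_iff₀ hδ).mp hlam
    rw [hrdef]; linarith
  -- pointwise bound on terms
  have hterm : ∀ ℓ k : ℕ, ‖lam ^ k * Z k ℓ / (k.factorial : ℂ)‖
      ≤ 2^ℓ * (((k:ℝ)+1)^ℓ * r^k) := by
    intro ℓ k
    have hfac : ‖((k.factorial : ℕ) : ℂ)‖ = (k.factorial : ℝ) := by
      rw [Complex.norm_natCast]
    rw [norm_div, norm_mul, norm_pow, hfac]
    have hfpos : (0:ℝ) < k.factorial := by positivity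
    rw [div_le_iff₀ hfpos]
    calc ‖lam‖^k * ‖Z k ℓ‖
        ≤ ‖lam‖^k * ((k.factorial : ℝ) * (δ/2)^k * 2^ℓ * ((k:ℝ)+1)^ℓ) := by
          gcongr; exact hbd k ℓ
      _ = 2^ℓ * (((k:ℝ)+1)^ℓ * r^k) * k.factorial := by
          rw [hrdef, mul_div_assoc, mul_pow]; ring
  -- summability of the majorant
  have hmaj : ∀ ℓ : ℕ, Summable (fun k : ℕ => 2^ℓ * (((k:ℝ)+1)^ℓ * r^k)) := by
    intro ℓ
    apply Summable.mul_left
    have heq : ∀ k : ℕ, ((k:ℝ)+1)^ℓ * r^k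
        = ∑ j ∈ Finset.range (ℓ+1), (ℓ.choose j : ℝ) * ((k:ℝ)^j * r^k) := by
      intro k
      rw [add_pow, Finset.sum_mul]
      refine Finset.sum_congr rfl fun j _ => by ring
    simp only [heq]
    apply summable_sum
    intro j _
    exact (summable_pow_mul_geometric_of_norm_lt_one (R := ℝ) j
      (by rwa [Real.norm_of_nonneg hr0])).mul_left _
  have hsn : ∀ ℓ : ℕ, Summable (fun k : ℕ => ‖lam ^ k * Z k ℓ / (k.factorial : ℂ)‖) :=
    fun ℓ => (hmaj ℓ).of_nonneg_of_le (fun k => norm_nonneg _) (hterm ℓ)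
  have hs : ∀ ℓ : ℕ, Summable (fun k : ℕ => lam ^ k * Z k ℓ / (k.factorial : ℂ)) :=
    fun ℓ => (hsn ℓ).of_norm
  refine ⟨hsn n, ?_⟩
  -- nonvanishing of the denominator
  have hne : (1 : ℂ) - lam * δ / 2 ≠ 0 := by
    intro h
    have h1 : lam * δ / 2 = 1 := by linear_combination -h
    have h2 : ‖lam * (δ:ℂ) / 2‖ = r := by
      rw [norm_div, norm_mul, Complex.norm_real, Real.norm_of_nonneg hδ.le]
      simp [hrdef]
    rw [h1] at h2
    simp at h2
    rw [← h2] at hr1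
    exact lt_irrefl _ hr1
  have ha0 : ∀ ℓ : ℕ, lam ^ 0 * Z 0 ℓ / ((0:ℕ).factorial : ℂ) = 1 := by
    intro ℓ; simp [hZ0]
  induction n with
  | zero =>
    rw [pow_zero]
    rw [tsum_eq_single 0]
    · simpa using ha0 0
    · intro k hk
      obtain ⟨m, rfl⟩ := Nat.exists_eq_succ_of_ne_zero hk
      simp [hZinit]
  | succ ℓ ih =>
    have hrec : ∀ k : ℕ, lam ^ (k+1) * Z (k+1) (ℓ+1) / (((k+1).factorial : ℕ) : ℂ)
        = lam ^ (k+1) * Z (k+1) ℓ / (((k+1).factorial : ℕ) : ℂ)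
          + lam * (δ:ℂ) / 2 * (lam ^ k * Z k ℓ / ((k.factorial : ℕ) : ℂ)
            + lam ^ k * Z k (ℓ+1) / ((k.factorial : ℕ) : ℂ)) := by
      intro k
      have hfc : (((k+1).factorial : ℕ) : ℂ) = ((k:ℂ)+1) * ((k.factorial : ℕ) : ℂ) := by
        push_cast [Nat.factorial_succ]; ring
      have hk0 : ((k.factorial : ℕ) : ℂ) ≠ 0 := by
        exact_mod_cast Nat.cast_ne_zero.mpr k.factorial_ne_zero
      have hk1 : ((k:ℂ)+1) ≠ 0 := Nat.cast_add_one_ne_zero k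
      rw [hZrec k ℓ, hfc, pow_succ]
      generalize Z (k+1) ℓ = A
      generalize Z k ℓ = B
      generalize Z k (ℓ+1) = C
      generalize lam ^ k = L
      field_simp
    have hA := hs ℓ
    have hB := hs (ℓ+1)
    have hA' : Summable (fun k : ℕ => lam ^ (k+1) * Z (k+1) ℓ / (((k+1).factorial : ℕ) : ℂ)) :=
      (summable_nat_add_iff (f := fun m : ℕ => lam ^ m * Z m ℓ / ((m.factorial : ℕ) : ℂ)) 1).mpr hA
    have hB' : Summable (fun k : ℕ => lam ^ (k+1) * Z (k+1) (ℓ+1) / (((k+1).factorial : ℕ) : ℂ)) :=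
      (summable_nat_add_iff (f := fun m : ℕ => lam ^ m * Z m (ℓ+1) / ((m.factorial : ℕ) : ℂ)) 1).mpr hB
    set S : ℂ := ∑' k : ℕ, lam ^ k * Z k ℓ / ((k.factorial : ℕ) : ℂ) with hSdef
    set T : ℂ := ∑' k : ℕ, lam ^ k * Z k (ℓ+1) / ((k.factorial : ℕ) : ℂ) with hTdef
    have hsplitS : S = 1 + ∑' k : ℕ, lam ^ (k+1) * Z (k+1) ℓ / (((k+1).factorial : ℕ) : ℂ) := by
      rw [hSdef, Summable.tsum_eq_zero_add hA, ha0 ℓ]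
    have hsplitT : T = 1 + ∑' k : ℕ, lam ^ (k+1) * Z (k+1) (ℓ+1) / (((k+1).factorial : ℕ) : ℂ) := by
      rw [hTdef, Summable.tsum_eq_zero_add hB, ha0 (ℓ+1)]
    have hsum2 : Summable (fun k : ℕ => lam * (δ:ℂ) / 2 *
        (lam ^ k * Z k ℓ / ((k.factorial : ℕ) : ℂ)
          + lam ^ k * Z k (ℓ+1) / ((k.factorial : ℕ) : ℂ))) :=
      ((hA.add hB).mul_left _)
    have hT' : ∑' k : ℕ, lam ^ (k+1) * Z (k+1) (ℓ+1) / (((k+1).factorial : ℕ) : ℂ)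
        = (∑' k : ℕ, lam ^ (k+1) * Z (k+1) ℓ / (((k+1).factorial : ℕ) : ℂ))
          + lam * (δ:ℂ) / 2 * (S + T) := by
      calc ∑' k : ℕ, lam ^ (k+1) * Z (k+1) (ℓ+1) / (((k+1).factorial : ℕ) : ℂ)
          = ∑' k : ℕ, (lam ^ (k+1) * Z (k+1) ℓ / (((k+1).factorial : ℕ) : ℂ)
            + lam * (δ:ℂ) / 2 * (lam ^ k * Z k ℓ / ((k.factorial : ℕ) : ℂ)
              + lam ^ k * Z k (ℓ+1) / ((k.factorial : ℕ) : ℂ))) := by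
            exact tsum_congr hrec
        _ = (∑' k : ℕ, lam ^ (k+1) * Z (k+1) ℓ / (((k+1).factorial : ℕ) : ℂ))
            + ∑' k : ℕ, lam * (δ:ℂ) / 2 *
              (lam ^ k * Z k ℓ / ((k.factorial : ℕ) : ℂ)
                + lam ^ k * Z k (ℓ+1) / ((k.factorial : ℕ) : ℂ)) :=
            Summable.tsum_add hA' hsum2
        _ = (∑' k : ℕ, lam ^ (k+1) * Z (k+1) ℓ / (((k+1).factorial : ℕ) : ℂ))
            + lam * (δ:ℂ) / 2 * (S + T) := by
            rw [tsum_mul_left, Summable.tsum_add hA hB]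
    have hshift : ∑' k : ℕ, lam ^ (k+1) * Z (k+1) ℓ / (((k+1).factorial : ℕ) : ℂ) = S - 1 := by
      rw [hsplitS]; ring
    have hEq : T * (1 - lam * (δ:ℂ) / 2) = S * (1 + lam * (δ:ℂ) / 2) := by
      have e1 : T = 1 + ((S - 1) + lam * (δ:ℂ) / 2 * (S + T)) := by
        calc T = 1 + ∑' k : ℕ, lam ^ (k+1) * Z (k+1) (ℓ+1) / (((k+1).factorial : ℕ) : ℂ) :=
              hsplitT
          _ = 1 + ((∑' k : ℕ, lam ^ (k+1) * Z (k+1) ℓ / (((k+1).factorial : ℕ) : ℂ))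
              + lam * (δ:ℂ) / 2 * (S + T)) := by rw [hT']
          _ = 1 + ((S - 1) + lam * (δ:ℂ) / 2 * (S + T)) := by rw [hshift]
      linear_combination e1
    have hq : T = S * ((1 + lam * (δ:ℂ) / 2) / (1 - lam * (δ:ℂ) / 2)) := by
      rw [← mul_div_assoc, eq_div_iff hne]; exact hEq
    rw [hq, ih, pow_succ]
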